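/- Let k have characteristic p > 0 and let r > 0. The coalgebra structure on k[T] induces a coalgebra structure on the quotient k[T]/(T^{p^r}), and the composite k[T]_{<p^r} ⊂ k[T] → k[T]/(T^{p^r}) is an isomorphism of coalgebras. -/

import Mathlib

noncomputable section

open TensorProduct Polynomial

set_option maxHeartbeats 1000000
set_option synthInstance.maxHeartbeats 400000

variable (k : Type) [Field k]

def gaComul : k[X] →ₐ[k] k[X] ⊗[k] k[X] :=
  aeval ((X : k[X]) ⊗ₜ[k] (1 : k[X]) + (1 : k[X]) ⊗ₜ[k] (X : k[X]))

def gaCounit : k[X] →ₐ[k] k := aeval 0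

variable {k}

/-- coassociativity and counit laws for a coalgebra structure `(Δ, ε)` on `C` -/
def IsCoalgebraStr {C : Type} [AddCommGroup C] [Module k C]
    (Δ : C →ₗ[k] C ⊗[k] C) (ε : C →ₗ[k] k) : Prop :=
  (∀ c, (TensorProduct.assoc k C C C) (LinearMap.rTensor C Δ (Δ c)) =
      LinearMap.lTensor C Δ (Δ c)) ∧
  (∀ c, (TensorProduct.lid k C) (LinearMap.rTensor C ε (Δ c)) = c) ∧
  (∀ c, (TensorProduct.rid k C) (LinearMap.lTensor C ε (Δ c)) = c)

variable (k)

/-- the quotient `k[T]/(T^{pʳ})`, i.e. the coordinate algebra of the Frobenius kernel. -/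
abbrev QuotT (p r : ℕ) : Type := k[X] ⧸ Ideal.span {(X : k[X]) ^ p ^ r}

namespace Statement6Aux

variable (p r : ℕ)

/-- the ideal -/
abbrev II : Ideal k[X] := Ideal.span {(X : k[X]) ^ p ^ r}

/-- the counit on the quotient, as an algebra map -/
def counitQA [Fact p.Prime] : QuotT k p r →ₐ[k] k :=
  Ideal.Quotient.liftₐ (II k p r) (gaCounit k) (by
    intro a ha
    obtain ⟨c, rfl⟩ := Ideal.mem_span_singleton.mp ha
    have hpr : p ^ r ≠ 0 := pow_ne_zero r (Fact.out (p := p.Prime)).ne_zero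
    simp [gaCounit, zero_pow hpr])

lemma counitQA_mk [Fact p.Prime] (f : k[X]) :
    counitQA k p r (Ideal.Quotient.mk (II k p r) f) = gaCounit k f := by
  rfl

instance [Fact p.Prime] : Nontrivial (QuotT k p r) :=
  (counitQA k p r).toRingHom.domain_nontrivial

instance [Fact p.Prime] : Nontrivial (QuotT k p r ⊗[k] QuotT k p r) :=
  (((Algebra.TensorProduct.lid k k).toAlgHom.comp
    (Algebra.TensorProduct.map (counitQA k p r) (counitQA k p r))).toRingHom).domain_nontrivial

instance instCharPQQ [Fact p.Prime] [CharP k p] :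
    CharP (QuotT k p r ⊗[k] QuotT k p r) p :=
  charP_of_injective_algebraMap (algebraMap k _).injective p

lemma mk_X_pow_eq_zero :
    (Ideal.Quotient.mk (II k p r) (X : k[X])) ^ p ^ r = 0 := by
  rw [← map_pow, Ideal.Quotient.eq_zero_iff_mem]
  exact Ideal.mem_span_singleton_self _

lemma key [Fact p.Prime] [CharP k p] :
    ((Algebra.TensorProduct.map (Ideal.Quotient.mkₐ k (II k p r))
        (Ideal.Quotient.mkₐ k (II k p r))).comp (gaComul k))
      ((X : k[X]) ^ p ^ r) = 0 := by
  have : ((Algebra.TensorProduct.map (Ideal.Quotient.mkₐ k (II k p r))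
        (Ideal.Quotient.mkₐ k (II k p r))).comp (gaComul k)) (X : k[X]) =
      (Ideal.Quotient.mk (II k p r) X) ⊗ₜ[k] 1 + 1 ⊗ₜ[k] (Ideal.Quotient.mk (II k p r) X) := by
    simp [gaComul]
  rw [map_pow, this, add_pow_char_pow (R := QuotT k p r ⊗[k] QuotT k p r) _ _ p r]
  rw [Algebra.TensorProduct.tmul_pow, Algebra.TensorProduct.tmul_pow,
    mk_X_pow_eq_zero, one_pow]
  simp

/-- the comultiplication on the quotient, as an algebra map -/
def comulQA [Fact p.Prime] [CharP k p] :
    QuotT k p r →ₐ[k] QuotT k p r ⊗[k] QuotT k p r :=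
  Ideal.Quotient.liftₐ (II k p r)
    ((Algebra.TensorProduct.map (Ideal.Quotient.mkₐ k (II k p r))
        (Ideal.Quotient.mkₐ k (II k p r))).comp (gaComul k)) (by
    intro a ha
    have : II k p r ≤ RingHom.ker ((Algebra.TensorProduct.map (Ideal.Quotient.mkₐ k (II k p r))
        (Ideal.Quotient.mkₐ k (II k p r))).comp (gaComul k)).toRingHom := by
      rw [Ideal.span_le, Set.singleton_subset_iff]
      exact key k p r
    exact this ha)

lemma comulQA_mk [Fact p.Prime] [CharP k p] (f : k[X]) :
    comulQA k p r (Ideal.Quotient.mk (II k p r) f) =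
      Algebra.TensorProduct.map (Ideal.Quotient.mkₐ k (II k p r))
        (Ideal.Quotient.mkₐ k (II k p r)) (gaComul k f) := by
  rfl

lemma comulQA_mk_X [Fact p.Prime] [CharP k p] :
    comulQA k p r (Ideal.Quotient.mk (II k p r) X) =
      (Ideal.Quotient.mk (II k p r) X) ⊗ₜ[k] 1 + 1 ⊗ₜ[k] (Ideal.Quotient.mk (II k p r) X) := by
  rw [comulQA_mk]
  simp [gaComul]

/-- tensoring of algebra maps agrees with tensoring of linear maps -/
lemma algMap_eq_linMap {A B C D : Type} [CommRing A] [CommRing B] [CommRing C] [CommRing D]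
    [Algebra k A] [Algebra k B] [Algebra k C] [Algebra k D]
    (f : A →ₐ[k] B) (g : C →ₐ[k] D) (x : A ⊗[k] C) :
    Algebra.TensorProduct.map f g x = TensorProduct.map f.toLinearMap g.toLinearMap x := by
  induction x with
  | zero => simp
  | tmul a c => simp
  | add x y hx hy => simp [hx, hy]

section PointwiseEq

variable [Fact p.Prime] [CharP k p]

lemma rTensor_comul_eq (x : QuotT k p r ⊗[k] QuotT k p r) :
    LinearMap.rTensor (QuotT k p r) (comulQA k p r).toLinearMap x =
      Algebra.TensorProduct.map (comulQA k p r) (AlgHom.id k (QuotT k p r)) x := by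
  induction x with
  | zero => simp
  | tmul a c => simp
  | add x y hx hy => rw [map_add, map_add, hx, hy]

lemma lTensor_comul_eq (x : QuotT k p r ⊗[k] QuotT k p r) :
    LinearMap.lTensor (QuotT k p r) (comulQA k p r).toLinearMap x =
      Algebra.TensorProduct.map (AlgHom.id k (QuotT k p r)) (comulQA k p r) x := by
  induction x with
  | zero => simp
  | tmul a c => simp
  | add x y hx hy => rw [map_add, map_add, hx, hy]

lemma rTensor_counit_eq (x : QuotT k p r ⊗[k] QuotT k p r) :
    LinearMap.rTensor (QuotT k p r) (counitQA k p r).toLinearMap x =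
      Algebra.TensorProduct.map (counitQA k p r) (AlgHom.id k (QuotT k p r)) x := by
  induction x with
  | zero => simp
  | tmul a c => simp
  | add x y hx hy => rw [map_add, map_add, hx, hy]

lemma lTensor_counit_eq (x : QuotT k p r ⊗[k] QuotT k p r) :
    LinearMap.lTensor (QuotT k p r) (counitQA k p r).toLinearMap x =
      Algebra.TensorProduct.map (AlgHom.id k (QuotT k p r)) (counitQA k p r) x := by
  induction x with
  | zero => simp
  | tmul a c => simp
  | add x y hx hy => rw [map_add, map_add, hx, hy]

lemma assocQ_eq (x : (QuotT k p r ⊗[k] QuotT k p r) ⊗[k] QuotT k p r) :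
    (TensorProduct.assoc k (QuotT k p r) (QuotT k p r) (QuotT k p r)) x =
      (Algebra.TensorProduct.assoc k k k (QuotT k p r) (QuotT k p r) (QuotT k p r)) x := by
  induction x with
  | zero => simp
  | tmul y c =>
    induction y with
    | zero => simp
    | tmul a b => simp
    | add y z hy hz => rw [add_tmul, map_add, map_add, hy, hz]
  | add x y hx hy => rw [map_add, map_add, hx, hy]

lemma lidQ_eq (x : k ⊗[k] QuotT k p r) :
    (TensorProduct.lid k (QuotT k p r)) x =
      (Algebra.TensorProduct.lid k (QuotT k p r)) x := by
  induction x with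
  | zero => simp
  | tmul a c => simp
  | add x y hx hy => rw [map_add, map_add, hx, hy]

lemma ridQ_eq (x : QuotT k p r ⊗[k] k) :
    (TensorProduct.rid k (QuotT k p r)) x =
      (Algebra.TensorProduct.rid k k (QuotT k p r)) x := by
  induction x with
  | zero => simp
  | tmul a c => simp
  | add x y hx hy => rw [map_add, map_add, hx, hy]

end PointwiseEq

end Statement6Aux

open Statement6Aux in
theorem statement6 (p : ℕ) [Fact p.Prime] [CharP k p] (r : ℕ) (hr : 0 < r) :
    ∃ (Δq : QuotT k p r →ₗ[k] QuotT k p r ⊗[k] QuotT k p r)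
      (εq : QuotT k p r →ₗ[k] k),
      (∀ f : k[X],
        Δq (Ideal.Quotient.mk (Ideal.span {(X : k[X]) ^ p ^ r}) f) =
          TensorProduct.map
            (Ideal.Quotient.mkₐ k (Ideal.span {(X : k[X]) ^ p ^ r})).toLinearMap
            (Ideal.Quotient.mkₐ k (Ideal.span {(X : k[X]) ^ p ^ r})).toLinearMap
            (gaComul k f)) ∧
      (∀ f : k[X],
        εq (Ideal.Quotient.mk (Ideal.span {(X : k[X]) ^ p ^ r}) f) = gaCounit k f) ∧
      IsCoalgebraStr Δq εq ∧
      Function.Bijective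
        (fun f : Polynomial.degreeLT k (p ^ r) =>
          Ideal.Quotient.mk (Ideal.span {(X : k[X]) ^ p ^ r}) (f : k[X])) := by
  set I : Ideal k[X] := Ideal.span {(X : k[X]) ^ p ^ r} with hI
  refine ⟨(comulQA k p r).toLinearMap, (counitQA k p r).toLinearMap, ?_, ?_, ⟨?_, ?_, ?_⟩, ?_, ?_⟩
  · intro f
    simpa [comulQA_mk] using algMap_eq_linMap k (Ideal.Quotient.mkₐ k (II k p r))
      (Ideal.Quotient.mkₐ k (II k p r)) (gaComul k f)
  · intro f
    exact counitQA_mk k p r f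
  · -- coassociativity
    intro c
    have E : ((Algebra.TensorProduct.assoc k k k (QuotT k p r) (QuotT k p r)
          (QuotT k p r)).toAlgHom.comp
        ((Algebra.TensorProduct.map (comulQA k p r)
          (AlgHom.id k (QuotT k p r))).comp (comulQA k p r))) =
        (Algebra.TensorProduct.map (AlgHom.id k (QuotT k p r))
          (comulQA k p r)).comp (comulQA k p r) := by
      apply Ideal.Quotient.algHom_ext
      apply Polynomial.algHom_ext
      simp only [AlgHom.coe_comp, Function.comp_apply, AlgEquiv.toAlgHom_eq_coe, AlgHom.coe_coe,
        Ideal.Quotient.mkₐ_eq_mk, comulQA_mk_X, map_add, Algebra.TensorProduct.map_tmul,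
        AlgHom.coe_id, id_eq, Algebra.TensorProduct.one_def, Algebra.TensorProduct.assoc_tmul,
        map_one, tmul_add, add_tmul, AlgEquiv.coe_algHom, (comulQA k p r).map_one]
      erw [(comulQA k p r).map_one]
      simp only [Algebra.TensorProduct.one_def, Algebra.TensorProduct.assoc_tmul]
      abel
    have hE := congrArg (fun F => F c) E
    simp only [AlgHom.coe_comp, Function.comp_apply, AlgEquiv.toAlgHom_eq_coe,
      AlgHom.coe_coe] at hE
    simp only [AlgHom.toLinearMap_apply]
    rw [rTensor_comul_eq k p r, lTensor_comul_eq k p r, assocQ_eq k p r]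
    exact hE
  · -- left counit law
    intro c
    have E : ((Algebra.TensorProduct.lid k (QuotT k p r)).toAlgHom.comp
        ((Algebra.TensorProduct.map (counitQA k p r) (AlgHom.id k _)).comp (comulQA k p r))) =
        AlgHom.id k (QuotT k p r) := by
      apply Ideal.Quotient.algHom_ext
      apply Polynomial.algHom_ext
      simp [comulQA_mk_X, counitQA_mk, gaCounit]
    have hE := congrArg (fun F => F c) E
    simp only [AlgHom.coe_comp, Function.comp_apply, AlgEquiv.toAlgHom_eq_coe,
      AlgHom.coe_coe, AlgHom.coe_id, id_eq] at hE
    simp only [AlgHom.toLinearMap_apply]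
    rw [rTensor_counit_eq k p r, lidQ_eq k p r]
    exact hE
  · -- right counit law
    intro c
    have E : ((Algebra.TensorProduct.rid k k (QuotT k p r)).toAlgHom.comp
        ((Algebra.TensorProduct.map (AlgHom.id k _) (counitQA k p r)).comp (comulQA k p r))) =
        AlgHom.id k (QuotT k p r) := by
      apply Ideal.Quotient.algHom_ext
      apply Polynomial.algHom_ext
      simp [comulQA_mk_X, counitQA_mk, gaCounit]
    have hE := congrArg (fun F => F c) E
    simp only [AlgHom.coe_comp, Function.comp_apply, AlgEquiv.toAlgHom_eq_coe,
      AlgHom.coe_coe, AlgHom.coe_id, id_eq] at hE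
    simp only [AlgHom.toLinearMap_apply]
    rw [lTensor_counit_eq k p r, ridQ_eq k p r]
    exact hE
  · -- injective
    intro f g hfg
    simp only at hfg
    have hmem : (f : k[X]) - (g : k[X]) ∈ I := Ideal.Quotient.eq.mp hfg
    have hdvd : (X : k[X]) ^ p ^ r ∣ (f : k[X]) - (g : k[X]) :=
      Ideal.mem_span_singleton.mp hmem
    have hf := Polynomial.mem_degreeLT.mp f.2
    have hg := Polynomial.mem_degreeLT.mp g.2
    have hsub : ((f : k[X]) - (g : k[X])).degree < (p ^ r : ℕ) :=
      lt_of_le_of_lt (Polynomial.degree_sub_le _ _) (max_lt hf hg)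
    by_cases h0 : (f : k[X]) - (g : k[X]) = 0
    · exact Subtype.ext (sub_eq_zero.mp h0)
    · exfalso
      have := Polynomial.degree_le_of_dvd hdvd h0
      rw [Polynomial.degree_X_pow] at this
      exact absurd (lt_of_le_of_lt this hsub) (lt_irrefl _)
  · -- surjective
    intro c
    obtain ⟨g, rfl⟩ := Ideal.Quotient.mk_surjective c
    have hmonic : ((X : k[X]) ^ p ^ r).Monic := Polynomial.monic_X_pow _
    refine ⟨⟨g %ₘ ((X : k[X]) ^ p ^ r), ?_⟩, ?_⟩
    · rw [Polynomial.mem_degreeLT]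
      have := Polynomial.degree_modByMonic_lt g hmonic
      rwa [Polynomial.degree_X_pow] at this
    · show Ideal.Quotient.mk I (g %ₘ ((X : k[X]) ^ p ^ r)) = Ideal.Quotient.mk I g
      rw [Ideal.Quotient.eq, Polynomial.modByMonic_eq_sub_mul_div g _]
      have heq : g - (X : k[X]) ^ p ^ r * (g /ₘ ((X : k[X]) ^ p ^ r)) - g =
          -((X : k[X]) ^ p ^ r * (g /ₘ ((X : k[X]) ^ p ^ r))) := by ring
      rw [heq]
      exact neg_mem (Ideal.mul_mem_right _ _ (Ideal.mem_span_singleton_self _))
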